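/- arXiv:1107.1171 — 3 statements merged into one kernel-verified Lean document; each statement's English description precedes it below -/
import Mathlib

section
/- Let H be a numerical semigroup with H ≠ ℕ, n ∈ H nonzero, k a field, and R' = k[H]/(t^n). Let b be a homogeneous socle element of R' of maximal degree. Then the Frobenius number f of H satisfies f = deg(b) - n, and the maximal degree deg(b) is independent of the choice of homogeneous basis of the socle. -/
lemma single_mem_span_single_iff
    (k : Type*) [Field k] (H : AddSubmonoid ℕ) (a b : H) :
    AddMonoidAlgebra.single a (1 : k) ∈
      Ideal.span {AddMonoidAlgebra.single b (1 : k)} ↔ ∃ c : H, a = b + c := by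
  constructor
  · intro h
    rw [Ideal.mem_span_singleton'] at h
    obtain ⟨y, hy⟩ := h
    have ha : a ∈ (AddMonoidAlgebra.single a (1 : k)).coeff.support := by
      simp [AddMonoidAlgebra.coeff_single, Finsupp.support_single_ne_zero]
    rw [← hy] at ha
    have := AddMonoidAlgebra.support_coeff_mul_subset y (AddMonoidAlgebra.single b (1 : k)) ha
    rw [Finset.mem_add] at this
    obtain ⟨c, hc, e, he, hce⟩ := this
    have heb : e = b := by
      have : (AddMonoidAlgebra.single b (1 : k)).coeff.support = {b} := by
        simp [AddMonoidAlgebra.coeff_single, Finsupp.support_single_ne_zero]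
      rw [this, Finset.mem_singleton] at he
      exact he
    exact ⟨c, by rw [← hce, heb, add_comm]⟩
  · rintro ⟨c, rfl⟩
    rw [Ideal.mem_span_singleton']
    exact ⟨AddMonoidAlgebra.single c (1 : k), by
      rw [AddMonoidAlgebra.single_mul_single, one_mul, add_comm]⟩

/-- In R' = k[H]/(t^n), if d is the maximal degree of a nonzero homogeneous
socle element (the degree of b, which is independent of the chosen basis of
the socle since it is characterized as a maximum), then the Frobenius number
of H is f = d - n. -/
theorem frobenius_eq_socle_degree_sub
    (k : Type*) [Field k]
    (H : AddSubmonoid ℕ) (hfin : {m : ℕ | m ∉ H}.Finite)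
    (hne : (H : Set ℕ) ≠ Set.univ)
    (n : ℕ) (hn : n ∈ H) (hn0 : n ≠ 0)
    (f d : ℕ)
    (hf : IsGreatest {m : ℕ | m ∉ H} f)
    (hd : IsGreatest {l : ℕ | ∃ hl : l ∈ H,
        Ideal.Quotient.mk (Ideal.span {AddMonoidAlgebra.single (⟨n, hn⟩ : H) (1 : k)})
          (AddMonoidAlgebra.single (⟨l, hl⟩ : H) (1 : k)) ≠ 0 ∧
        ∀ m : H, (m : ℕ) ≠ 0 →
          Ideal.Quotient.mk (Ideal.span {AddMonoidAlgebra.single (⟨n, hn⟩ : H) (1 : k)})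
              (AddMonoidAlgebra.single (⟨l, hl⟩ : H) (1 : k)) *
            Ideal.Quotient.mk (Ideal.span {AddMonoidAlgebra.single (⟨n, hn⟩ : H) (1 : k)})
              (AddMonoidAlgebra.single m (1 : k)) = 0} d) :
    n ≤ d ∧ f = d - n := by
  obtain ⟨hfH, hfmax⟩ := hf
  have hgt : ∀ m : ℕ, f < m → m ∈ H := by
    intro m hm
    by_contra hmH
    exact absurd (hfmax hmH) (not_le.mpr hm)
  -- f + n is in the set
  have hfnH : f + n ∈ H := hgt _ (by omega)
  have hmem : f + n ∈ {l : ℕ | ∃ hl : l ∈ H,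
        Ideal.Quotient.mk (Ideal.span {AddMonoidAlgebra.single (⟨n, hn⟩ : H) (1 : k)})
          (AddMonoidAlgebra.single (⟨l, hl⟩ : H) (1 : k)) ≠ 0 ∧
        ∀ m : H, (m : ℕ) ≠ 0 →
          Ideal.Quotient.mk (Ideal.span {AddMonoidAlgebra.single (⟨n, hn⟩ : H) (1 : k)})
              (AddMonoidAlgebra.single (⟨l, hl⟩ : H) (1 : k)) *
            Ideal.Quotient.mk (Ideal.span {AddMonoidAlgebra.single (⟨n, hn⟩ : H) (1 : k)})
              (AddMonoidAlgebra.single m (1 : k)) = 0} := by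
    refine ⟨hfnH, ?_, ?_⟩
    · intro h
      rw [Ideal.Quotient.eq_zero_iff_mem,
        single_mem_span_single_iff] at h
      obtain ⟨c, hc⟩ := h
      have : f + n = n + (c : ℕ) := congrArg Subtype.val hc
      have : (c : ℕ) = f := by omega
      exact hfH (this ▸ c.2)
    · intro m hm0
      rw [← map_mul, AddMonoidAlgebra.single_mul_single, one_mul,
        Ideal.Quotient.eq_zero_iff_mem, single_mem_span_single_iff]
      have hfm : f + (m : ℕ) ∈ H := hgt _ (by omega)
      refine ⟨⟨f + (m : ℕ), hfm⟩, ?_⟩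
      ext
      show f + n + (m : ℕ) = n + (f + (m : ℕ))
      omega
  have hle : f + n ≤ d := hd.2 hmem
  obtain ⟨hdH, hdne, _⟩ := hd.1
  have hdle : d ≤ f + n := by
    by_contra h
    push_neg at h
    have hdn : d - n ∈ H := hgt _ (by omega)
    apply hdne
    rw [Ideal.Quotient.eq_zero_iff_mem, single_mem_span_single_iff]
    exact ⟨⟨d - n, hdn⟩, by ext; show d = n + (d - n); omega⟩
  constructor <;> omega
end

section
/- Let H be a numerical semigroup, n ∈ H nonzero, k a field, R' = k[H]/(t^n). Then max Ap(H,n) equals the maximal degree of a nonzero homogeneous element of the socle of R'. -/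
lemma single_mem_span_iff
    (k : Type*) [Field k]
    (H : AddSubmonoid ℕ) (n : ℕ) (hn : n ∈ H) (l : ℕ) (hl : l ∈ H) :
    AddMonoidAlgebra.single (⟨l, hl⟩ : H) (1 : k) ∈
      Ideal.span {AddMonoidAlgebra.single (⟨n, hn⟩ : H) (1 : k)} ↔
    n ≤ l ∧ l - n ∈ H := by
  classical
  rw [Ideal.mem_span_singleton]
  constructor
  · rintro ⟨c, hc⟩
    have hl0 : (⟨l, hl⟩ : H) ∈
        (AddMonoidAlgebra.single (⟨l, hl⟩ : H) (1 : k)).coeff.support := by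
      rw [AddMonoidAlgebra.coeff_single, Finsupp.support_single_ne_zero _ (one_ne_zero)]
      exact Finset.mem_singleton_self _
    rw [hc] at hl0
    have h2 := AddMonoidAlgebra.support_coeff_mul_subset _ _ hl0
    rw [Finset.mem_add] at h2
    obtain ⟨y, hy, z, hz, hyz⟩ := h2
    have hy' : y ∈ ({(⟨n, hn⟩ : H)} : Finset H) :=
      Finsupp.support_single_subset hy
    rw [Finset.mem_singleton] at hy'
    subst hy'
    have hl' : l = n + (z : ℕ) := by
      have := congrArg (fun x : H => (x : ℕ)) hyz
      simpa using this.symm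
    constructor
    · omega
    · have : l - n = (z : ℕ) := by omega
      rw [this]; exact z.2
  · rintro ⟨h1, h2⟩
    refine ⟨AddMonoidAlgebra.single (⟨l - n, h2⟩ : H) 1, ?_⟩
    rw [AddMonoidAlgebra.single_mul_single, one_mul]
    congr 1
    ext
    simp
    omega

/-- max Ap(H,n) equals the maximal degree of a nonzero homogeneous element of
the socle of R' = k[H]/(t^n). -/
theorem max_apery_eq_socle_degree
    (k : Type*) [Field k]
    (H : AddSubmonoid ℕ) (hfin : {m : ℕ | m ∉ H}.Finite)
    (hne : (H : Set ℕ) ≠ Set.univ)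
    (n : ℕ) (hn : n ∈ H) (hn0 : n ≠ 0)
    (a d : ℕ)
    (ha : IsGreatest {h : ℕ | h ∈ H ∧ ¬(n ≤ h ∧ h - n ∈ H)} a)
    (hd : IsGreatest {l : ℕ | ∃ hl : l ∈ H,
        Ideal.Quotient.mk (Ideal.span {AddMonoidAlgebra.single (⟨n, hn⟩ : H) (1 : k)})
          (AddMonoidAlgebra.single (⟨l, hl⟩ : H) (1 : k)) ≠ 0 ∧
        ∀ m : H, (m : ℕ) ≠ 0 →
          Ideal.Quotient.mk (Ideal.span {AddMonoidAlgebra.single (⟨n, hn⟩ : H) (1 : k)})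
              (AddMonoidAlgebra.single (⟨l, hl⟩ : H) (1 : k)) *
            Ideal.Quotient.mk (Ideal.span {AddMonoidAlgebra.single (⟨n, hn⟩ : H) (1 : k)})
              (AddMonoidAlgebra.single m (1 : k)) = 0} d) :
    a = d := by
  set I := Ideal.span {AddMonoidAlgebra.single (⟨n, hn⟩ : H) (1 : k)} with hI
  have key : ∀ (l : ℕ) (hl : l ∈ H),
      Ideal.Quotient.mk I (AddMonoidAlgebra.single (⟨l, hl⟩ : H) (1 : k)) = 0 ↔
      (n ≤ l ∧ l - n ∈ H) := by
    intro l hl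
    rw [Ideal.Quotient.eq_zero_iff_mem, hI, single_mem_span_iff]
  apply le_antisymm
  · -- a ≤ d : show a is in the socle set
    apply hd.2
    obtain ⟨haH, hap⟩ := ha.1
    refine ⟨haH, ?_, ?_⟩
    · simp only [ne_eq, key a haH]; exact hap
    · intro m hm
      rw [← map_mul, AddMonoidAlgebra.single_mul_single, one_mul]
      have ham : a + (m : ℕ) ∈ H := H.add_mem haH m.2
      have heq : ((⟨a, haH⟩ : H) + m) = (⟨a + (m : ℕ), ham⟩ : H) := by
        ext; simp
      rw [heq, key _ ham]
      by_contra hcon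
      have : a + (m : ℕ) ≤ a := ha.2 ⟨ham, hcon⟩
      omega
  · -- d ≤ a : d is in the Apery set
    obtain ⟨hdH, hdne, _⟩ := hd.1
    apply ha.2
    refine ⟨hdH, ?_⟩
    intro hcon
    exact hdne ((key d hdH).2 hcon)
end

section
/- The presentation ideal of the monomial curve (t⁶, t⁸, t⁹) is generated by X₁³ - X₃² and X₂³ - X₁X₃²; that is, the kernel of the map k[X₁,X₂,X₃] → k[t] with X₁↦t⁶, X₂↦t⁸, X₃↦t⁹ equals (X₁³ - X₃², X₂³ - X₁X₃²). -/
open MvPolynomial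

namespace Pres689

variable (k : Type*) [Field k]

noncomputable def II : Ideal (MvPolynomial (Fin 3) k) :=
  Ideal.span ({X 0 ^ 3 - X 2 ^ 2, X 1 ^ 3 - X 0 * X 2 ^ 2} : Set (MvPolynomial (Fin 3) k))

noncomputable def φ : MvPolynomial (Fin 3) k →ₐ[k] Polynomial k :=
  aeval (fun i : Fin 3 => (Polynomial.X : Polynomial k) ^ (![6, 8, 9] i))

def na (a b : ℕ) : ℕ := (a + b / 3) % 3
def nb (b : ℕ) : ℕ := b % 3
def nc (a b c : ℕ) : ℕ := c + 2 * (b / 3) + 2 * ((a + b / 3) / 3)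

def W (e : Fin 3 →₀ ℕ) : ℕ := 6 * e 0 + 8 * e 1 + 9 * e 2

noncomputable def nfe (e : Fin 3 →₀ ℕ) : Fin 3 →₀ ℕ :=
  Finsupp.equivFunOnFinite.symm ![na (e 0) (e 1), nb (e 1), nc (e 0) (e 1) (e 2)]

variable {k}

lemma nfe_apply (e : Fin 3 →₀ ℕ) :
    nfe e 0 = na (e 0) (e 1) ∧ nfe e 1 = nb (e 1) ∧ nfe e 2 = nc (e 0) (e 1) (e 2) := by
  refine ⟨?_, ?_, ?_⟩ <;> simp [nfe]

lemma rel1 : (Ideal.Quotient.mk (II k)) (X 0) ^ 3 = (Ideal.Quotient.mk (II k)) (X 2) ^ 2 := by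
  rw [← map_pow, ← map_pow, Ideal.Quotient.eq]
  exact Ideal.subset_span (by simp)

lemma rel2 : (Ideal.Quotient.mk (II k)) (X 1) ^ 3 =
    (Ideal.Quotient.mk (II k)) (X 0) * (Ideal.Quotient.mk (II k)) (X 2) ^ 2 := by
  rw [← map_pow, ← map_pow, ← map_mul, Ideal.Quotient.eq]
  exact Ideal.subset_span (by simp)

lemma pow0 (a : ℕ) : (Ideal.Quotient.mk (II k)) (X 0) ^ a =
    (Ideal.Quotient.mk (II k)) (X 0) ^ (a % 3) *
      (Ideal.Quotient.mk (II k)) (X 2) ^ (2 * (a / 3)) := by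
  conv_lhs => rw [← Nat.mod_add_div a 3]
  rw [pow_add, pow_mul, rel1, ← pow_mul]

lemma pow1 (b : ℕ) : (Ideal.Quotient.mk (II k)) (X 1) ^ b =
    (Ideal.Quotient.mk (II k)) (X 1) ^ (b % 3) *
      (Ideal.Quotient.mk (II k)) (X 0) ^ (b / 3) *
      (Ideal.Quotient.mk (II k)) (X 2) ^ (2 * (b / 3)) := by
  conv_lhs => rw [← Nat.mod_add_div b 3]
  rw [pow_add, pow_mul, rel2, mul_pow, ← pow_mul, ← mul_assoc]

lemma key (a b c : ℕ) :
    (X 0 ^ a * X 1 ^ b * X 2 ^ c : MvPolynomial (Fin 3) k) -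
      X 0 ^ na a b * X 1 ^ nb b * X 2 ^ nc a b c ∈ II k := by
  rw [← Ideal.Quotient.eq]
  set Q := Ideal.Quotient.mk (II k)
  simp only [map_mul, map_pow]
  calc Q (X 0) ^ a * Q (X 1) ^ b * Q (X 2) ^ c
      = (Q (X 0) ^ a * Q (X 0) ^ (b/3)) * Q (X 1) ^ (b % 3) *
          (Q (X 2) ^ (2 * (b/3)) * Q (X 2) ^ c) := by rw [pow1]; ring
    _ = Q (X 0) ^ (a + b/3) * Q (X 1) ^ (b % 3) * Q (X 2) ^ (2 * (b/3) + c) := by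
        rw [pow_add, pow_add]
    _ = (Q (X 0) ^ na a b * Q (X 2) ^ (2 * ((a + b/3)/3))) * Q (X 1) ^ nb b *
          Q (X 2) ^ (2 * (b/3) + c) := by rw [pow0 (a + b/3)]; rfl
    _ = Q (X 0) ^ na a b * Q (X 1) ^ nb b * Q (X 2) ^ nc a b c := by
        rw [show nc a b c = 2 * ((a + b/3)/3) + (2 * (b/3) + c) by unfold nc; omega, pow_add]
        ring

lemma mono_eq (d : Fin 3 →₀ ℕ) (c : k) :
    monomial d c = C c * (X 0 ^ d 0 * X 1 ^ d 1 * X 2 ^ d 2) := by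
  rw [monomial_eq, Finsupp.prod_fintype _ _ (fun i => pow_zero _), Fin.prod_univ_three]

lemma phi_monomial (d : Fin 3 →₀ ℕ) (c : k) :
    φ k (monomial d c) = Polynomial.C c * Polynomial.X ^ W d := by
  rw [φ, aeval_monomial, Finsupp.prod_fintype _ _ (fun i => pow_zero _), Fin.prod_univ_three]
  simp only [Matrix.cons_val_zero, Matrix.cons_val_one, Matrix.head_cons, Matrix.cons_val_two,
    Matrix.tail_cons]
  rw [← pow_mul, ← pow_mul, ← pow_mul, ← pow_add, ← pow_add]
  rw [show (Polynomial.C c : Polynomial k) = algebraMap k (Polynomial k) c from rfl]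
  rfl

lemma W_inj {d d' : Fin 3 →₀ ℕ} (h0 : d 0 < 3) (h1 : d 1 < 3) (h0' : d' 0 < 3)
    (h1' : d' 1 < 3) (h : W d = W d') : d = d' := by
  simp only [W] at h
  have e0 : d 0 = d' 0 ∧ d 1 = d' 1 ∧ d 2 = d' 2 := by omega
  ext i
  fin_cases i
  · exact e0.1
  · exact e0.2.1
  · exact e0.2.2

lemma span_le_ker : II k ≤ RingHom.ker (φ k) := by
  rw [II, Ideal.span_le]
  rintro x hx
  simp only [Set.mem_insert_iff, Set.mem_singleton_iff] at hx
  rcases hx with rfl | rfl <;>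
  · simp only [SetLike.mem_coe, RingHom.mem_ker, AlgHom.coe_ringHom_mk, φ, map_sub, map_mul,
      map_pow, aeval_X]
    norm_num [← pow_mul, ← pow_add, show (![6, 8, 9] : Fin 3 → ℕ) 2 = 9 from rfl]

lemma normal_zero (r : MvPolynomial (Fin 3) k)
    (hs : ∀ e ∈ r.support, e 0 < 3 ∧ e 1 < 3) (h : φ k r = 0) : r = 0 := by
  ext d
  rw [coeff_zero]
  by_cases hd : d ∈ r.support
  · have expand : φ k r = ∑ e ∈ r.support, Polynomial.C (coeff e r) * Polynomial.X ^ W e := by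
      conv_lhs => rw [as_sum r]
      rw [map_sum]
      exact Finset.sum_congr rfl fun e _ => phi_monomial e _
    have h2 := congrArg (fun q : Polynomial k => q.coeff (W d)) h
    rw [expand] at h2
    simp only [Polynomial.finset_sum_coeff, Polynomial.coeff_C_mul, Polynomial.coeff_X_pow,
      Polynomial.coeff_zero] at h2
    rw [Finset.sum_eq_single_of_mem d hd] at h2
    · simpa using h2
    · intro e he hne
      have : ¬ (W d = W e) := fun hw =>
        hne (W_inj (hs e he).1 (hs e he).2 (hs d hd).1 (hs d hd).2 hw.symm)
      simp [this]
  · exact notMem_support_iff.mp hd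

theorem main : RingHom.ker (φ k) = II k := by
  classical
  refine le_antisymm ?_ span_le_ker
  intro p hp
  rw [RingHom.mem_ker] at hp
  set r : MvPolynomial (Fin 3) k := ∑ e ∈ p.support, monomial (nfe e) (coeff e p) with hr
  have hpr : p - r ∈ II k := by
    have hd : p - r = ∑ e ∈ p.support,
        (monomial e (coeff e p) - monomial (nfe e) (coeff e p)) := by
      rw [Finset.sum_sub_distrib, ← as_sum]
    rw [hd]
    refine Ideal.sum_mem _ fun e he => ?_
    rw [mono_eq, mono_eq, (nfe_apply e).1, (nfe_apply e).2.1, (nfe_apply e).2.2, ← mul_sub]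
    exact Ideal.mul_mem_left _ _ (key _ _ _)
  have hφr : φ k r = 0 := by
    have h1 : φ k (p - r) = 0 := span_le_ker hpr
    rw [map_sub, hp, zero_sub, neg_eq_zero] at h1
    exact h1
  have hrs : ∀ e ∈ r.support, e 0 < 3 ∧ e 1 < 3 := by
    intro e he
    have := MvPolynomial.support_sum (s := p.support)
      (f := fun e => monomial (nfe e) (coeff e p)) he
    rw [Finset.mem_biUnion] at this
    obtain ⟨d, _, hed⟩ := this
    have : e = nfe d := by
      have h3 := support_monomial (s := nfe d) (a := coeff d p)
      by_cases hz : coeff d p = 0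
      · rw [h3] at hed; simp [hz] at hed
      · rw [h3] at hed; simp [hz] at hed; exact hed
    subst this
    refine ⟨?_, ?_⟩
    · rw [(nfe_apply d).1]; exact Nat.mod_lt _ (by norm_num)
    · rw [(nfe_apply d).2.1]; exact Nat.mod_lt _ (by norm_num)
  have hr0 : r = 0 := normal_zero r hrs hφr
  rw [hr0, sub_zero] at hpr
  exact hpr

end Pres689

/-- The presentation ideal of the monomial curve (t⁶,t⁸,t⁹):
ker(k[X₁,X₂,X₃] → k[t], X₁↦t⁶, X₂↦t⁸, X₃↦t⁹) = (X₁³ - X₃², X₂³ - X₁X₃²). -/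
theorem presentation_ideal_689
    (k : Type*) [Field k] :
    RingHom.ker (aeval (fun i : Fin 3 =>
        (Polynomial.X : Polynomial k) ^ (![6, 8, 9] i)) :
        MvPolynomial (Fin 3) k →ₐ[k] Polynomial k) =
      Ideal.span ({X 0 ^ 3 - X 2 ^ 2, X 1 ^ 3 - X 0 * X 2 ^ 2} :
        Set (MvPolynomial (Fin 3) k)) := by
  exact Pres689.main
end
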